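/- arXiv:1107.4070 — 4 statements merged into one kernel-verified Lean document; each statement's English description precedes it below -/
import Mathlib

section
/- Let x_1, ..., x_n be vectors in R^N. Then the sum over all pairs i ≠ j of ⟨x_i, x_j⟩ is at most 4 times the maximum over subsets E of {1,...,n} of the double sum over i in E and j in the complement of E of ⟨x_i, x_j⟩. -/
open scoped BigOperators

lemma card_cut (n : ℕ) (i j : Fin n) (h : i ≠ j) :
    (Finset.univ.filter (fun E : Finset (Fin n) => i ∈ E ∧ j ∉ E)).card = 2 ^ (n - 2) := by
  have key : (Finset.univ.filter (fun E : Finset (Fin n) => i ∈ E ∧ j ∉ E)).card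
      = (((Finset.univ : Finset (Fin n)).erase i).erase j).powerset.card := by
    refine Finset.card_bij' (fun E _ => E.erase i) (fun A _ => insert i A) ?hi ?hj ?li ?ri
    case hi =>
      intro E hE
      simp only [Finset.mem_filter, Finset.mem_univ, true_and] at hE
      rw [Finset.mem_powerset]
      intro k hk
      rcases Finset.mem_erase.mp hk with ⟨hki, hkE⟩
      simp only [Finset.mem_erase, Finset.mem_univ, and_true]
      exact ⟨fun hkj => hE.2 (hkj ▸ hkE), hki⟩
    case hj =>
      intro A hA
      rw [Finset.mem_powerset] at hA
      simp only [Finset.mem_filter, Finset.mem_univ, true_and]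
      refine ⟨Finset.mem_insert_self _ _, ?_⟩
      intro hjmem
      rcases Finset.mem_insert.mp hjmem with h' | h'
      · exact h h'.symm
      · have := hA h'
        simp only [Finset.mem_erase, Finset.mem_univ, and_true] at this
        exact this.1 rfl
    case li =>
      intro E hE
      simp only [Finset.mem_filter, Finset.mem_univ, true_and] at hE
      exact Finset.insert_erase hE.1
    case ri =>
      intro A hA
      rw [Finset.mem_powerset] at hA
      apply Finset.erase_insert
      intro hiA
      have := hA hiA
      simp only [Finset.mem_erase, Finset.mem_univ, and_true] at this
      exact this.2 rfl
  rw [key, Finset.card_powerset]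
  congr 1
  rw [Finset.card_erase_of_mem, Finset.card_erase_of_mem] <;>
    simp [h.symm, Finset.mem_erase]
  omega

theorem stmt0 (n N : ℕ) (x : Fin n → EuclideanSpace ℝ (Fin N)) :
    ∑ i : Fin n, ∑ j ∈ Finset.univ \ {i}, (inner ℝ (x i) (x j) : ℝ) ≤
      4 * ⨆ E : Finset (Fin n), ∑ i ∈ E, ∑ j ∈ Eᶜ, (inner ℝ (x i) (x j) : ℝ) := by
  set c : Fin n → Fin n → ℝ := fun i j => (inner ℝ (x i) (x j) : ℝ) with hc
  set S : ℝ := ∑ i : Fin n, ∑ j ∈ Finset.univ \ {i}, c i j with hS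
  set f : Finset (Fin n) → ℝ := fun E => ∑ i ∈ E, ∑ j ∈ Eᶜ, c i j with hf
  have step1 : ∀ E : Finset (Fin n), f E =
      ∑ i : Fin n, ∑ j ∈ Finset.univ \ {i},
        (if i ∈ E ∧ j ∉ E then c i j else 0) := by
    intro E
    have h1 : f E = ∑ i : Fin n, ∑ j : Fin n,
        (if i ∈ E ∧ j ∉ E then c i j else 0) := by
      rw [hf]
      have hfilE : Finset.univ.filter (· ∈ E) = E := by ext a; simp
      have hfilC : Finset.univ.filter (· ∉ E) = Eᶜ := by
        ext a; simp [Finset.mem_compl]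
      calc ∑ i ∈ E, ∑ j ∈ Eᶜ, c i j
          = ∑ i ∈ Finset.univ.filter (· ∈ E), ∑ j ∈ Finset.univ.filter (· ∉ E), c i j := by
            rw [hfilE, hfilC]
        _ = ∑ i : Fin n, if i ∈ E then ∑ j : Fin n, (if j ∉ E then c i j else 0) else 0 := by
            rw [Finset.sum_filter]
            apply Finset.sum_congr rfl
            intro i _
            by_cases hi : i ∈ E
            · simp only [hi, if_true]
              rw [Finset.sum_filter]
            · simp [hi]
        _ = ∑ i : Fin n, ∑ j : Fin n, (if i ∈ E ∧ j ∉ E then c i j else 0) := by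
            apply Finset.sum_congr rfl
            intro i _
            by_cases hi : i ∈ E <;> simp [hi]
    rw [h1]
    apply Finset.sum_congr rfl
    intro i _
    rw [Finset.sum_eq_sum_sdiff_singleton_add (Finset.mem_univ i)]
    simp
  have hT : ∑ E : Finset (Fin n), f E = (2 ^ (n - 2) : ℝ) * S := by
    calc ∑ E : Finset (Fin n), f E
        = ∑ E : Finset (Fin n), ∑ i : Fin n, ∑ j ∈ Finset.univ \ {i},
            (if i ∈ E ∧ j ∉ E then c i j else 0) := by
          exact Finset.sum_congr rfl (fun E _ => step1 E)
      _ = ∑ i : Fin n, ∑ j ∈ Finset.univ \ {i}, ∑ E : Finset (Fin n),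
            (if i ∈ E ∧ j ∉ E then c i j else 0) := by
          rw [Finset.sum_comm]
          exact Finset.sum_congr rfl (fun i _ => Finset.sum_comm)
      _ = ∑ i : Fin n, ∑ j ∈ Finset.univ \ {i}, (2 ^ (n - 2) : ℝ) * c i j := by
          apply Finset.sum_congr rfl
          intro i _
          apply Finset.sum_congr rfl
          intro j hj
          have hij : i ≠ j := by
            intro h
            simp [h] at hj
          rw [← Finset.sum_filter, Finset.sum_const, card_cut n i j hij,
            nsmul_eq_mul]
          push_cast
          ring
      _ = (2 ^ (n - 2) : ℝ) * S := by
          rw [hS, Finset.mul_sum]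
          exact Finset.sum_congr rfl (fun i _ => (Finset.mul_sum _ _ _).symm)
  have hne : (Finset.univ : Finset (Finset (Fin n))).Nonempty := Finset.univ_nonempty
  have havg : ∑ _E : Finset (Fin n), (S / 4) ≤ ∑ E : Finset (Fin n), f E := by
    rw [hT, Finset.sum_const, nsmul_eq_mul]
    have hcard : (Finset.univ : Finset (Finset (Fin n))).card = 2 ^ n := by
      simp [Finset.card_univ]
    rw [hcard]
    rcases le_or_gt 2 n with hn | hn
    · have hexp : n = (n - 2) + 2 := by omega
      rw [hexp, pow_add]
      push_cast
      ring_nf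
      rfl
    · have hS0 : S = 0 := by
        rw [hS]
        have : ∀ i : Fin n, (Finset.univ : Finset (Fin n)) \ {i} = ∅ := by
          intro i
          rw [Finset.sdiff_eq_empty_iff_subset]
          intro j _
          have : Subsingleton (Fin n) :=
            ⟨fun a b => Fin.ext (by omega)⟩
          simp [Subsingleton.elim j i]
        simp [this]
      rw [hS0]
      simp
  obtain ⟨E, -, hE⟩ := Finset.exists_le_of_sum_le hne havg
  have hbdd : BddAbove (Set.range f) := Set.Finite.bddAbove (Set.finite_range f)
  calc S = 4 * (S / 4) := by ring
    _ ≤ 4 * f E := by linarith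
    _ ≤ 4 * ⨆ E, f E := by
        have := le_ciSup hbdd E
        linarith
end

section
/- Let ℓ_0 ≥ ℓ_1 ≥ ... ≥ ℓ_s be positive integers, and let F be the set of functions f : {1,...,ℓ_0} → {0,1,...,s} such that for every 1 ≤ i ≤ s the set {r : f(r) ≥ i} has cardinality at most ℓ_i. Then |F| ≤ ∏_{i=1}^{s} (e ℓ_{i-1}/ℓ_i)^{ℓ_i}. -/
open scoped BigOperators
open Finset

-- number of subsets of an m-set of size ≤ k
def NB (m k : ℕ) : ℕ := ∑ j ∈ Finset.range (k+1), m.choose j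

open Classical in
noncomputable def Fam (ℓ : ℕ → ℕ) (s : ℕ) : Finset (Fin (ℓ 0) → Fin (s+1)) :=
  Finset.univ.filter (fun f => ∀ i, 1 ≤ i → i ≤ s →
    ((Finset.univ.filter (fun r => i ≤ (f r : ℕ))).card ≤ ℓ i))

lemma NB_mono_left {m m' : ℕ} (k : ℕ) (h : m ≤ m') : NB m k ≤ NB m' k :=
  Finset.sum_le_sum fun j _ => Nat.choose_le_choose j h

lemma card_subsets_le (T : Finset α) (k : ℕ) [DecidableEq α] :
    ((T.powerset).filter (fun S => S.card ≤ k)).card ≤ NB T.card k := by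
  classical
  have hsub : (T.powerset).filter (fun S => S.card ≤ k) ⊆
      (Finset.range (k+1)).biUnion (fun j => T.powersetCard j) := by
    intro S hS
    simp only [mem_filter, mem_powerset] at hS
    simp only [mem_biUnion, mem_range, mem_powersetCard]
    exact ⟨S.card, by omega, hS.1, rfl⟩
  calc _ ≤ ((Finset.range (k+1)).biUnion (fun j => T.powersetCard j)).card :=
        Finset.card_le_card hsub
    _ ≤ ∑ j ∈ Finset.range (k+1), (T.powersetCard j).card := Finset.card_biUnion_le
    _ = NB T.card k := by simp [NB, Finset.card_powersetCard]

lemma key (ℓ : ℕ → ℕ) : ∀ s, (Fam ℓ s).card ≤ ∏ i ∈ Finset.Icc 1 s, NB (ℓ (i-1)) (ℓ i) := by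
  intro s
  induction s with
  | zero =>
    have h1 : (Fam ℓ 0).card ≤ (Finset.univ : Finset (Fin (ℓ 0) → Fin 1)).card := by
      apply Finset.card_le_card
      intro f _
      exact Finset.mem_univ f
    have h2 : (Finset.univ : Finset (Fin (ℓ 0) → Fin 1)).card = 1 := by simp
    rw [show Finset.Icc 1 0 = ∅ by simp, Finset.prod_empty]
    omega
  | succ s ih =>
    classical
    set π : (Fin (ℓ 0) → Fin (s+2)) → (Fin (ℓ 0) → Fin (s+1)) :=
      fun f r => ⟨min (f r : ℕ) s, by omega⟩ with hπ
    have hmaps : ∀ f ∈ Fam ℓ (s+1), π f ∈ Fam ℓ s := by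
      intro f hf
      simp only [Fam, mem_filter, mem_univ, true_and] at hf ⊢
      intro i hi1 his
      have := hf i hi1 (by omega)
      convert this using 2
      ext r
      simp only [mem_filter, mem_univ, true_and, hπ]
      constructor
      · intro h; exact le_trans h (min_le_left _ _)
      · intro h; simp only [le_min_iff]; exact ⟨h, his⟩
    have hfiber : ∀ g ∈ Fam ℓ s,
        ((Fam ℓ (s+1)).filter (fun f => π f = g)).card ≤ NB (ℓ s) (ℓ (s+1)) := by
      intro g hg
      set T : Finset (Fin (ℓ 0)) := Finset.univ.filter (fun r => s ≤ (g r : ℕ)) with hT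
      have hTcard : T.card ≤ ℓ s := by
        rcases Nat.eq_zero_or_pos s with hs0 | hs0
        · subst hs0
          have : T = Finset.univ := by
            ext r; simp [hT]
          rw [this]; simp
        · simp only [Fam, mem_filter, mem_univ, true_and] at hg
          exact hg s hs0 le_rfl
      have hinj : ((Fam ℓ (s+1)).filter (fun f => π f = g)).card ≤
          ((T.powerset).filter (fun S => S.card ≤ ℓ (s+1))).card := by
        apply Finset.card_le_card_of_injOn
          (fun f => Finset.univ.filter (fun r => (f r : ℕ) = s+1))
        · intro f hf
          simp only [coe_filter, Set.mem_setOf_eq, mem_filter] at hf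
          obtain ⟨hfF, hfg⟩ := hf
          simp only [Fam, mem_filter, mem_univ, true_and] at hfF
          simp only [Finset.mem_coe, mem_filter, mem_powerset]
          refine ⟨?_, ?_⟩
          · intro r hr
            simp only [mem_filter, mem_univ, true_and] at hr
            simp only [hT, mem_filter, mem_univ, true_and]
            have : (π f r : ℕ) = s := by simp [hπ, hr]
            rw [← hfg]; omega
          · have h1 := hfF (s+1) (by omega) le_rfl
            convert h1 using 2
            ext r
            have : (f r : ℕ) < s + 2 := (f r).isLt
            simp only [mem_filter, mem_univ, true_and]
            omega
        · intro f hf f' hf' heq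
          simp only [coe_filter, Set.mem_setOf_eq, mem_filter] at hf hf'
          have heq' : Finset.univ.filter (fun r => (f r : ℕ) = s+1)
              = Finset.univ.filter (fun r => (f' r : ℕ) = s+1) := heq
          funext r
          have h1 : (π f r : ℕ) = (π f' r : ℕ) := by rw [hf.2, hf'.2]
          simp only [hπ] at h1
          have h2 : ((f r : ℕ) = s+1) ↔ ((f' r : ℕ) = s+1) := by
            constructor <;> intro h
            · have : r ∈ Finset.univ.filter (fun r => (f r : ℕ) = s+1) := by
                simp [h]
              rw [heq'] at this
              simpa using this
            · have : r ∈ Finset.univ.filter (fun r => (f' r : ℕ) = s+1) := by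
                simp [h]
              rw [← heq'] at this
              simpa using this
          have hlt : (f r : ℕ) < s + 2 := (f r).isLt
          have hlt' : (f' r : ℕ) < s + 2 := (f' r).isLt
          apply Fin.ext
          omega
      calc _ ≤ _ := hinj
        _ ≤ NB T.card (ℓ (s+1)) := card_subsets_le T _
        _ ≤ NB (ℓ s) (ℓ (s+1)) := NB_mono_left _ hTcard
    have := Finset.card_le_mul_card_image_of_maps_to hmaps (NB (ℓ s) (ℓ (s+1))) hfiber
    calc (Fam ℓ (s+1)).card ≤ NB (ℓ s) (ℓ (s+1)) * (Fam ℓ s).card := this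
      _ ≤ NB (ℓ s) (ℓ (s+1)) * ∏ i ∈ Finset.Icc 1 s, NB (ℓ (i-1)) (ℓ i) :=
        Nat.mul_le_mul_left _ ih
      _ = ∏ i ∈ Finset.Icc 1 (s+1), NB (ℓ (i-1)) (ℓ i) := by
        rw [Finset.prod_Icc_succ_top (by omega)]
        simp [mul_comm]

lemma NB_le_real (m k : ℕ) (hk : 1 ≤ k) (hkm : k ≤ m) :
    (NB m k : ℝ) ≤ (Real.exp 1 * m / k) ^ k := by
  have hm : 0 < m := lt_of_lt_of_le hk hkm
  set x : ℝ := (k : ℝ) / m with hx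
  have hx0 : 0 < x := by positivity
  have hx1 : x ≤ 1 := by
    rw [hx, div_le_one (by positivity)]
    exact_mod_cast hkm
  have h1 : (NB m k : ℝ) * x ^ k ≤ ∑ j ∈ Finset.range (k+1), (m.choose j : ℝ) * x ^ j := by
    rw [NB]
    push_cast
    rw [Finset.sum_mul]
    apply Finset.sum_le_sum
    intro j hj
    have hjk : j ≤ k := by simp at hj; omega
    exact mul_le_mul_of_nonneg_left (pow_le_pow_of_le_one hx0.le hx1 hjk) (by positivity)
  have h2 : ∑ j ∈ Finset.range (k+1), (m.choose j : ℝ) * x ^ j ≤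
      ∑ j ∈ Finset.range (m+1), (m.choose j : ℝ) * x ^ j := by
    apply Finset.sum_le_sum_of_subset_of_nonneg
    · exact Finset.range_subset_range.2 (by omega)
    · intro j _ _; positivity
  have h3 : ∑ j ∈ Finset.range (m+1), (m.choose j : ℝ) * x ^ j = (x + 1) ^ m := by
    rw [add_pow]
    apply Finset.sum_congr rfl
    intro j _
    ring
  have h4 : (x + 1) ^ m ≤ Real.exp 1 ^ k := by
    have : x + 1 ≤ Real.exp x := Real.add_one_le_exp x
    have hm0 : (m : ℝ) ≠ 0 := by positivity
    calc (x + 1) ^ m ≤ Real.exp x ^ m := by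
          apply pow_le_pow_left₀ (by positivity) this
      _ = Real.exp 1 ^ k := by
          rw [← Real.exp_nat_mul, ← Real.exp_nat_mul]
          congr 1
          rw [hx]
          field_simp
  have h5 : (NB m k : ℝ) * x ^ k ≤ Real.exp 1 ^ k := by
    calc _ ≤ _ := h1
      _ ≤ _ := h2
      _ = _ := h3
      _ ≤ _ := h4
  have hxk : 0 < x ^ k := by positivity
  have hm0 : (m : ℝ) ≠ 0 := by positivity
  have hk0 : (k : ℝ) ≠ 0 := by positivity
  rw [← mul_le_mul_iff_left₀ hxk]
  calc (NB m k : ℝ) * x ^ k ≤ Real.exp 1 ^ k := h5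
    _ = (Real.exp 1 * m / k) ^ k * x ^ k := by
      rw [← mul_pow]
      congr 1
      rw [hx]
      field_simp

theorem stmt1 (s : ℕ) (ℓ : ℕ → ℕ) (hpos : ∀ i ≤ s, 0 < ℓ i)
    (hanti : ∀ i, 1 ≤ i → i ≤ s → ℓ i ≤ ℓ (i - 1)) :
    (Set.ncard {f : Fin (ℓ 0) → Fin (s + 1) |
        ∀ i, 1 ≤ i → i ≤ s → ({r : Fin (ℓ 0) | i ≤ (f r : ℕ)}.ncard ≤ ℓ i)} : ℝ) ≤
      ∏ i ∈ Finset.Icc 1 s, (Real.exp 1 * ℓ (i - 1) / ℓ i) ^ ℓ i := by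
  classical
  have hset : {f : Fin (ℓ 0) → Fin (s + 1) |
      ∀ i, 1 ≤ i → i ≤ s → ({r : Fin (ℓ 0) | i ≤ (f r : ℕ)}.ncard ≤ ℓ i)} = ↑(Fam ℓ s) := by
    ext f
    simp only [Set.mem_setOf_eq, Finset.coe_filter, Fam, Finset.mem_coe, Finset.mem_filter,
      Finset.mem_univ, true_and]
    constructor <;> intro h i hi1 his <;> have := h i hi1 his
    · convert this using 1
      rw [Set.ncard_eq_toFinset_card']
      congr 1
      ext r
      simp
    · convert this using 1
      rw [Set.ncard_eq_toFinset_card']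
      congr 1
      ext r
      simp
  rw [hset, Set.ncard_coe_finset]
  calc ((Fam ℓ s).card : ℝ) ≤ ((∏ i ∈ Finset.Icc 1 s, NB (ℓ (i-1)) (ℓ i) : ℕ) : ℝ) := by
        exact_mod_cast key ℓ s
    _ = ∏ i ∈ Finset.Icc 1 s, (NB (ℓ (i-1)) (ℓ i) : ℝ) := by push_cast; rfl
    _ ≤ ∏ i ∈ Finset.Icc 1 s, (Real.exp 1 * ℓ (i - 1) / ℓ i) ^ ℓ i := by
      apply Finset.prod_le_prod
      · intro i _; positivity
      · intro i hi
        simp only [Finset.mem_Icc] at hi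
        exact NB_le_real _ _ (hpos i hi.2) (hanti i hi.1 hi.2)
end

section
/- Fix 1/√m ≤ b ≤ 1 with m ≤ N, and define m₁ = m₁(b) > 0 by the equation m₁ log(eN/m₁) = (√m / b) log(eN/m). Then log(m/m₁(b)) ≤ 2 log(e b √m). -/
lemma stmt7_aux (M L u lu E : ℝ) (hM : 0 < M) (hL : 1 ≤ L) (hu : 1 ≤ u)
    (hlu : lu ≤ u - 1) (hE : 7 ≤ E) :
    M * (L + 2 + 2 * lu) * u ≤ M * L * (E * u ^ 2) := by
  have h1 : L + 2 + 2 * lu ≤ L + 2 * u := by linarith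
  have h2 : L + 2 * u ≤ 7 * u * L := by nlinarith
  have h3 : 7 * u * L ≤ E * u * L := by nlinarith
  calc M * (L + 2 + 2 * lu) * u ≤ M * (E * u * L) * u := by
        apply mul_le_mul_of_nonneg_right _ (by linarith : (0:ℝ) ≤ u)
        apply mul_le_mul_of_nonneg_left _ hM.le
        linarith
    _ = M * L * (E * u ^ 2) := by ring

set_option maxHeartbeats 1600000 in
theorem stmt7 (m N : ℕ) (hm : 1 ≤ m) (hmN : m ≤ N) (b : ℝ)
    (hb1 : 1 / Real.sqrt m ≤ b) (hb2 : b ≤ 1)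
    (m₁ : ℝ) (hm₁pos : 0 < m₁) (hm₁N : m₁ ≤ N)
    (heq : m₁ * Real.log (Real.exp 1 * N / m₁) =
      Real.sqrt m / b * Real.log (Real.exp 1 * N / m)) :
    Real.log (m / m₁) ≤ 2 * Real.log (Real.exp 1 * b * Real.sqrt m) := by
  set e := Real.exp 1 with he
  have hepos : (0:ℝ) < e := Real.exp_pos 1
  have he2 : 2.7 < e := by rw [he]; linarith [Real.exp_one_gt_d9]
  have hloge : Real.log e = 1 := Real.log_exp 1
  have hmpos : (0:ℝ) < m := by exact_mod_cast hm
  have hNpos : (0:ℝ) < N := lt_of_lt_of_le hmpos (by exact_mod_cast hmN)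
  have hNm : (m:ℝ) ≤ N := by exact_mod_cast hmN
  set r := Real.sqrt m with hr
  have hr1 : (1:ℝ) ≤ r := Real.one_le_sqrt.mpr (by exact_mod_cast hm)
  have hrpos : (0:ℝ) < r := lt_of_lt_of_le one_pos hr1
  have hrsq : r ^ 2 = m := Real.sq_sqrt hmpos.le
  have hbpos : (0:ℝ) < b := lt_of_lt_of_le (by positivity) hb1
  set u := b * r with hu
  have hu1 : (1:ℝ) ≤ u := by
    have := (div_le_iff₀ hrpos).mp hb1
    linarith [this]
  have hupos : (0:ℝ) < u := lt_of_lt_of_le one_pos hu1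
  -- the function g
  set c := e * (N:ℝ) with hc
  have hcpos : 0 < c := by positivity
  have hlogc : Real.log c = 1 + Real.log N := by
    rw [hc, Real.log_mul hepos.ne' hNpos.ne', hloge]
  set g : ℝ → ℝ := fun z => Real.log c * z - z * Real.log z with hg
  have hgmono : StrictMonoOn g (Set.Ioc 0 (N:ℝ)) := by
    apply strictMonoOn_of_deriv_pos (convex_Ioc _ _)
    · exact (Continuous.sub (continuous_const.mul continuous_id)
        Real.continuous_mul_log).continuousOn
    · intro x hx
      rw [interior_Ioc] at hx
      have hx0 : 0 < x := hx.1
      have hd1 : HasDerivAt (fun z : ℝ => Real.log c * z) (Real.log c) x := by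
        simpa using (hasDerivAt_id x).const_mul (Real.log c)
      have hd2 : HasDerivAt (fun z : ℝ => z * Real.log z) (Real.log x + 1) x :=
        Real.hasDerivAt_mul_log hx0.ne'
      have hder : deriv (fun z : ℝ => Real.log c * z - z * Real.log z) x = Real.log c - (Real.log x + 1) :=
        (hd1.sub hd2).deriv
      rw [hg, hder, hlogc]
      have : Real.log x < Real.log N := Real.log_lt_log hx0 hx.2
      linarith
  have hgval : ∀ z : ℝ, 0 < z → g z = z * Real.log (c / z) := by
    intro z hz
    rw [hg, Real.log_div hcpos.ne' hz.ne']
    ring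
  -- t
  set t : ℝ := 1 / (e ^ 2 * b ^ 2) with ht
  have htpos : 0 < t := by positivity
  have hb2m : (1:ℝ) ≤ b ^ 2 * m := by
    have h2 : (1/r) ^ 2 ≤ b ^ 2 := by
      apply pow_le_pow_left₀ (by positivity) hb1
    rw [div_pow, one_pow, hrsq] at h2
    calc (1:ℝ) = (1 / (m:ℝ)) * m := by field_simp
      _ ≤ b ^ 2 * m := by nlinarith
  have htm : t ≤ (m:ℝ) := by
    rw [ht, div_le_iff₀ (by positivity)]
    nlinarith [hb2m, hmpos, sq_nonneg e, sq_nonneg b, he2]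
  have htN : t ≤ (N:ℝ) := le_trans htm hNm
  have hlogt : Real.log t = -(2 + 2 * Real.log b) := by
    rw [ht, one_div, Real.log_inv, Real.log_mul (by positivity) (by positivity),
      Real.log_pow, Real.log_pow, hloge]
    push_cast; ring
  -- L
  set L := Real.log (c / m) with hL
  have hLval : L = 1 + Real.log N - Real.log m := by
    rw [hL, Real.log_div hcpos.ne' hmpos.ne', hlogc]
  have hL1 : 1 ≤ L := by
    have : Real.log m ≤ Real.log N := Real.log_le_log hmpos hNm
    linarith
  clear_value L t g c u r e
  -- key inequality : g t ≤ (r/b) * L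
  have hlogu : Real.log u ≤ u - 1 := by
    have := Real.log_le_sub_one_of_pos hupos
    linarith
  have hlogb : Real.log b = Real.log u - Real.log r := by
    rw [hu, Real.log_mul hbpos.ne' hrpos.ne']; ring
  have hlogm : Real.log m = 2 * Real.log r := by
    rw [← hrsq, Real.log_pow]; push_cast; ring
  have hkey : g t ≤ r / b * L := by
    have hgt : g t = t * (3 + Real.log N + 2 * Real.log b) := by
      rw [hgval t htpos, Real.log_div hcpos.ne' htpos.ne', hlogc, hlogt]
      ring
    rw [hgt]
    have htval : t = (m:ℝ) / (e ^ 2 * u ^ 2) := by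
      rw [ht, hu, mul_pow, ← hrsq]
      rw [div_eq_div_iff (by positivity) (by positivity)]
      ring
    have hrb : r / b = (m:ℝ) / u := by
      rw [hu, ← hrsq]
      field_simp
    rw [htval, hrb, div_mul_eq_mul_div, div_mul_eq_mul_div,
      div_le_div_iff₀ (mul_pos (pow_pos hepos 2) (pow_pos hupos 2)) hupos]
    have hexp : 3 + Real.log N + 2 * Real.log b = L + 2 + 2 * Real.log u := by
      rw [hLval, hlogb, hlogm]; ring
    rw [hexp]
    have he7 : (7:ℝ) ≤ e ^ 2 := by nlinarith [he2]
    exact stmt7_aux (m:ℝ) L u (Real.log u) (e ^ 2) hmpos hL1 hu1 hlogu he7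
  -- g t ≤ g m₁
  have hgm₁ : g m₁ = r / b * L := by
    rw [hgval m₁ hm₁pos, heq]
  have htm₁ : t ≤ m₁ := by
    by_contra hlt
    push_neg at hlt
    have := hgmono (Set.mem_Ioc.mpr ⟨hm₁pos, hm₁N⟩) (Set.mem_Ioc.mpr ⟨htpos, htN⟩) hlt
    rw [hgm₁] at this
    linarith [hkey]
  -- conclude
  have hlog1 : Real.log ((m:ℝ) / m₁) = Real.log m - Real.log m₁ :=
    Real.log_div hmpos.ne' hm₁pos.ne'
  have hlog2 : Real.log (e * b * r) = 1 + Real.log b + Real.log r := by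
    rw [Real.log_mul (by positivity) hrpos.ne', Real.log_mul hepos.ne' hbpos.ne', hloge]
  have hlogtm₁ : Real.log t ≤ Real.log m₁ := Real.log_le_log htpos htm₁
  rw [hlog1, hlog2]
  rw [hlogt] at hlogtm₁
  rw [hlogm]
  linarith
end

section
/- Let E_1, ..., E_n be independent symmetric exponential random variables with variance 1 (density 2^{-1/2} exp(−√2|t|)). Then there is an absolute constant C such that for every x ∈ R^n and every p ≥ 1, (E|∑_{i=1}^n x_i E_i|^p)^{1/p} ≤ C(√p |x| + p ‖x‖_∞). -/
open MeasureTheory ProbabilityTheory Real Set Filter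
open scoped BigOperators ENNReal NNReal

noncomputable def gkDens (s : ℝ) : ℝ := (Real.sqrt 2)⁻¹ * Real.exp (-(Real.sqrt 2 * |s|))

lemma gkDens_nonneg (s : ℝ) : 0 ≤ gkDens s :=
  mul_nonneg (inv_nonneg.2 (Real.sqrt_nonneg 2)) (Real.exp_nonneg _)

lemma gkDens_meas : Measurable gkDens :=
  (measurable_const.mul ((measurable_const.mul (_root_.continuous_abs.measurable)).neg.exp))

lemma gk_exp_Ioi {b : ℝ} (hb : 0 < b) :
    ∫ x in Ioi (0:ℝ), Real.exp (-(b * x)) = b⁻¹ := by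
  have hderiv : ∀ x ∈ Ici (0:ℝ),
      HasDerivAt (fun x => -Real.exp (-(b * x)) / b) (Real.exp (-(b * x))) x := by
    intro x _
    have h1 : HasDerivAt (fun x : ℝ => -(b * x)) (-b) x := by
      simpa [neg_mul] using ((hasDerivAt_id x).const_mul b).fun_neg
    have := (h1.exp.fun_neg.div_const b)
    refine this.congr_deriv ?_
    field_simp
  have hint : IntegrableOn (fun x => Real.exp (-(b * x))) (Ioi (0:ℝ)) := by
    simpa [neg_mul] using exp_neg_integrableOn_Ioi 0 hb
  have htend : Tendsto (fun x => -Real.exp (-(b * x)) / b) atTop (nhds 0) := by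
    have : Tendsto (fun x : ℝ => -(b * x)) atTop atBot :=
      tendsto_neg_atBot_iff.mpr (tendsto_id.const_mul_atTop hb)
    have := (Real.tendsto_exp_atBot.comp this).neg.div_const b
    simpa using this
  have := integral_Ioi_of_hasDerivAt_of_tendsto' hderiv hint htend
  rw [this]; field_simp; simp

lemma gk_one_lt_sqrt2 : (1:ℝ) < Real.sqrt 2 := by
  have h : Real.sqrt 2 ^ 2 = 2 := Real.sq_sqrt (by norm_num)
  nlinarith [Real.sqrt_nonneg 2]

lemma gk_integrableOn_Ioi {u : ℝ} (hu : |u| ≤ 1) :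
    IntegrableOn (fun s => gkDens s * Real.exp (u * s)) (Ioi (0:ℝ)) := by
  have hpos : 0 < Real.sqrt 2 - u := by
    have := abs_le.1 hu; linarith [gk_one_lt_sqrt2]
  have base : IntegrableOn (fun s => Real.exp (-(Real.sqrt 2 - u) * s)) (Ioi (0:ℝ)) :=
    exp_neg_integrableOn_Ioi 0 hpos
  refine IntegrableOn.congr_fun (base.const_mul ((Real.sqrt 2)⁻¹)) (fun s hs => ?_)
    measurableSet_Ioi
  simp only [gkDens]
  rw [abs_of_pos hs, mul_assoc, ← Real.exp_add]
  congr 2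
  ring

lemma gk_integrableOn_Iic {u : ℝ} (hu : |u| ≤ 1) :
    IntegrableOn (fun s => gkDens s * Real.exp (u * s)) (Iic (0:ℝ)) := by
  have hpos : 0 < Real.sqrt 2 + u := by
    have := abs_le.1 hu; linarith [gk_one_lt_sqrt2]
  have m : MeasurableEmbedding (fun x : ℝ => -x) :=
    (Homeomorph.neg ℝ).measurableEmbedding
  rw [show (volume : Measure ℝ) = Measure.map (fun x : ℝ => -x) volume from
    (Measure.map_neg_eq_self _).symm] at *
  rw [m.integrableOn_map_iff]
  have hpre : (fun x : ℝ => -x) ⁻¹' (Iic 0) = Ici 0 := by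
    ext x; simp
  rw [hpre]
  rw [integrableOn_Ici_iff_integrableOn_Ioi]
  have base : IntegrableOn (fun s => Real.exp (-(Real.sqrt 2 + u) * s)) (Ioi (0:ℝ)) :=
    exp_neg_integrableOn_Ioi 0 hpos
  refine IntegrableOn.congr_fun (base.const_mul ((Real.sqrt 2)⁻¹)) (fun s hs => ?_)
    measurableSet_Ioi
  show (Real.sqrt 2)⁻¹ * Real.exp (-(Real.sqrt 2 + u) * s) = gkDens (-s) * Real.exp (u * (-s))
  simp only [gkDens]
  rw [abs_neg, abs_of_pos hs, mul_assoc, ← Real.exp_add]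
  congr 2
  ring

lemma gk_integrable {u : ℝ} (hu : |u| ≤ 1) :
    Integrable (fun s => gkDens s * Real.exp (u * s)) (volume : Measure ℝ) := by
  rw [← integrableOn_univ, ← Iic_union_Ioi (a := (0:ℝ)), integrableOn_union]
  exact ⟨gk_integrableOn_Iic hu, gk_integrableOn_Ioi hu⟩

lemma gk_integral_Ioi {u : ℝ} (hu : |u| ≤ 1) :
    ∫ s in Ioi (0:ℝ), gkDens s * Real.exp (u * s) = (Real.sqrt 2)⁻¹ * (Real.sqrt 2 - u)⁻¹ := by
  have hpos : 0 < Real.sqrt 2 - u := by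
    have := abs_le.1 hu; linarith [gk_one_lt_sqrt2]
  have heq : ∀ s ∈ Ioi (0:ℝ), gkDens s * Real.exp (u * s)
      = (Real.sqrt 2)⁻¹ * Real.exp (-((Real.sqrt 2 - u) * s)) := by
    intro s hs
    simp only [gkDens]
    rw [abs_of_pos hs, mul_assoc, ← Real.exp_add]
    congr 2
    ring
  rw [setIntegral_congr_fun measurableSet_Ioi heq, integral_const_mul, gk_exp_Ioi hpos]

lemma gk_integral_Iic {u : ℝ} (hu : |u| ≤ 1) :
    ∫ s in Iic (0:ℝ), gkDens s * Real.exp (u * s) = (Real.sqrt 2)⁻¹ * (Real.sqrt 2 + u)⁻¹ := by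
  have hpos : 0 < Real.sqrt 2 + u := by
    have := abs_le.1 hu; linarith [gk_one_lt_sqrt2]
  have h2 := integral_comp_neg_Ioi (0:ℝ) (fun y : ℝ => gkDens y * Real.exp (u * y))
  rw [neg_zero] at h2
  rw [← h2]
  have heq : ∀ s ∈ Ioi (0:ℝ), gkDens (-s) * Real.exp (u * -s)
      = (Real.sqrt 2)⁻¹ * Real.exp (-((Real.sqrt 2 + u) * s)) := by
    intro s hs
    simp only [gkDens]
    rw [abs_neg, abs_of_pos hs, mul_assoc, ← Real.exp_add]
    congr 2
    ring
  rw [setIntegral_congr_fun measurableSet_Ioi heq, integral_const_mul, gk_exp_Ioi hpos]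

lemma gk_integral_le {u : ℝ} (hu : |u| ≤ 1) :
    ∫ s, gkDens s * Real.exp (u * s) ≤ Real.exp (u ^ 2) := by
  have hsq : Real.sqrt 2 ^ 2 = 2 := Real.sq_sqrt (by norm_num)
  have hu2 : u ^ 2 ≤ 1 := by nlinarith [sq_abs u, abs_nonneg u]
  have hm : 0 < Real.sqrt 2 - u := by
    have := abs_le.1 hu; linarith [gk_one_lt_sqrt2]
  have hp : 0 < Real.sqrt 2 + u := by
    have := abs_le.1 hu; linarith [gk_one_lt_sqrt2]
  have htot : ∫ s, gkDens s * Real.exp (u * s)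
      = (Real.sqrt 2)⁻¹ * (Real.sqrt 2 + u)⁻¹ + (Real.sqrt 2)⁻¹ * (Real.sqrt 2 - u)⁻¹ := by
    rw [← intervalIntegral.integral_Iic_add_Ioi (gk_integrableOn_Iic hu) (gk_integrableOn_Ioi hu),
      gk_integral_Iic hu, gk_integral_Ioi hu]
  have hne : (2:ℝ) - u ^ 2 ≠ 0 := by nlinarith
  have h2u : (Real.sqrt 2 + u) * (Real.sqrt 2 - u) = 2 - u ^ 2 := by linear_combination hsq
  have h0 : Real.sqrt 2 ≠ 0 := by positivity
  have key : ((Real.sqrt 2)⁻¹ * (Real.sqrt 2 + u)⁻¹ + (Real.sqrt 2)⁻¹ * (Real.sqrt 2 - u)⁻¹)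
      * (2 - u ^ 2) = 2 := by
    rw [← h2u]
    field_simp
    ring
  have hval : (Real.sqrt 2)⁻¹ * (Real.sqrt 2 + u)⁻¹ + (Real.sqrt 2)⁻¹ * (Real.sqrt 2 - u)⁻¹
      = 2 / (2 - u ^ 2) := (eq_div_iff hne).mpr key
  rw [htot, hval, div_le_iff₀ (by nlinarith : (0:ℝ) < 2 - u ^ 2)]
  nlinarith [Real.add_one_le_exp (u ^ 2), sq_nonneg u, sq_nonneg (u ^ 2)]

lemma gk_rpow_key {p a : ℝ} (hp : 0 < p) (ha : 0 ≤ a) :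
    a ^ p ≤ (p / Real.exp 1) ^ p * Real.exp a := by
  rcases eq_or_lt_of_le ha with h0 | ha0
  · rw [← h0, Real.zero_rpow hp.ne']
    positivity
  · rw [← Real.log_le_log_iff (Real.rpow_pos_of_pos ha0 p) (by positivity),
      Real.log_rpow ha0, Real.log_mul (by positivity) (Real.exp_ne_zero a),
      Real.log_rpow (by positivity), Real.log_exp, Real.log_div hp.ne' (Real.exp_ne_zero 1),
      Real.log_exp]
    have hlog : Real.log (a / p) ≤ a / p - 1 := Real.log_le_sub_one_of_pos (by positivity)
    rw [Real.log_div ha0.ne' hp.ne'] at hlog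
    have := mul_le_mul_of_nonneg_left hlog hp.le
    rw [mul_sub, mul_sub, mul_div_cancel₀ _ hp.ne', mul_one] at this
    linarith

lemma gk_rpow_le {p lam s : ℝ} (hp : 1 ≤ p) (hl : 0 < lam) :
    |s| ^ p ≤ (p / (Real.exp 1 * lam)) ^ p
      * (Real.exp (lam * s) + Real.exp (-(lam * s))) := by
  have hp0 : (0:ℝ) < p := lt_of_lt_of_le one_pos hp
  have ha : (0:ℝ) ≤ lam * |s| := mul_nonneg hl.le (abs_nonneg s)
  have habs : Real.exp (lam * |s|) ≤ Real.exp (lam * s) + Real.exp (-(lam * s)) := by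
    rcases abs_cases s with ⟨h1, _⟩ | ⟨h1, _⟩
    · rw [h1]; exact le_add_of_nonneg_right (Real.exp_pos _).le
    · rw [h1, mul_neg, ← neg_mul]
      exact le_add_of_nonneg_left (Real.exp_pos _).le
  have key := gk_rpow_key hp0 ha
  calc |s| ^ p = ((lam * |s|) / lam) ^ p := by rw [mul_div_cancel_left₀ _ hl.ne']
    _ = (lam * |s|) ^ p / lam ^ p := Real.div_rpow ha hl.le p
    _ ≤ ((p / Real.exp 1) ^ p * Real.exp (lam * |s|)) / lam ^ p := by
        gcongr
    _ = (p / (Real.exp 1 * lam)) ^ p * Real.exp (lam * |s|) := by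
        rw [show p / (Real.exp 1 * lam) = (p / Real.exp 1) / lam by ring,
          Real.div_rpow (by positivity) hl.le]
        ring
    _ ≤ (p / (Real.exp 1 * lam)) ^ p * (Real.exp (lam * s) + Real.exp (-(lam * s))) := by
        apply mul_le_mul_of_nonneg_left habs (by positivity)

lemma gk_mgf {Ω : Type} [MeasureSpace Ω] {X : Ω → ℝ} (hX : Measurable X)
    (hmap : Measure.map X ℙ = (volume : Measure ℝ).withDensity
      (fun s => ENNReal.ofReal (gkDens s))) {u : ℝ} (hu : |u| ≤ 1) :
    Integrable (fun ω => Real.exp (u * X ω)) ℙ ∧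
      ∫ ω, Real.exp (u * X ω) ≤ Real.exp (u ^ 2) := by
  have hd : Measurable fun s => (gkDens s).toNNReal := gkDens_meas.real_toNNReal
  have hmap' : Measure.map X ℙ = (volume : Measure ℝ).withDensity
      (fun s => ((gkDens s).toNNReal : ℝ≥0∞)) := hmap
  have hgm : Measurable fun s : ℝ => Real.exp (u * s) :=
    (measurable_id.const_mul u).exp
  have h1 : Integrable (fun s => Real.exp (u * s)) (Measure.map X ℙ) := by
    rw [hmap', integrable_withDensity_iff_integrable_smul hd]
    refine (gk_integrable hu).congr (ae_of_all _ fun s => ?_)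
    simp [NNReal.smul_def, Real.coe_toNNReal _ (gkDens_nonneg s)]
  have hint : Integrable (fun ω => Real.exp (u * X ω)) ℙ := by
    have := (integrable_map_measure hgm.aestronglyMeasurable hX.aemeasurable).mp h1
    exact this
  refine ⟨hint, ?_⟩
  have h2 : ∫ ω, Real.exp (u * X ω) = ∫ s, Real.exp (u * s) ∂(Measure.map X ℙ) :=
    (integral_map hX.aemeasurable hgm.aestronglyMeasurable).symm
  rw [h2, hmap', integral_withDensity_eq_integral_smul hd]
  have h3 : (fun s => (gkDens s).toNNReal • Real.exp (u * s))
      = fun s => gkDens s * Real.exp (u * s) := by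
    funext s
    simp [NNReal.smul_def, Real.coe_toNNReal _ (gkDens_nonneg s)]
  rw [h3]
  exact gk_integral_le hu

theorem stmt13 :
    ∃ C : ℝ, 0 < C ∧
      ∀ (n : ℕ) (Ω : Type) (_ : MeasureSpace Ω), IsProbabilityMeasure (ℙ : Measure Ω) →
        ∀ E : Fin n → Ω → ℝ, (∀ i, Measurable (E i)) →
          iIndepFun E ℙ →
          (∀ i, Measure.map (E i) ℙ =
            (volume : Measure ℝ).withDensity
              (fun s => ENNReal.ofReal
                ((Real.sqrt 2)⁻¹ * Real.exp (-(Real.sqrt 2 * |s|))))) →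
          ∀ x : Fin n → ℝ, ∀ p : ℝ, 1 ≤ p →
            (∫ ω, |∑ i, x i * E i ω| ^ p) ^ (1 / p) ≤
              C * (Real.sqrt p * Real.sqrt (∑ i, x i ^ 2) + p * ⨆ i, |x i|) := by
  refine ⟨2, by norm_num, ?_⟩
  intro n Ω _ hprob E hmeas hindep hmap x p hp
  have hp0 : (0:ℝ) < p := by linarith
  by_cases hx : ∀ i, x i = 0
  · have h0 : (∫ ω, |∑ i, x i * E i ω| ^ p) = 0 := by
      have hz : ∀ ω : Ω, |∑ i, x i * E i ω| ^ p = 0 := by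
        intro ω
        rw [Finset.sum_eq_zero (fun i _ => by rw [hx i, zero_mul]), abs_zero,
          Real.zero_rpow hp0.ne']
      simp only [hz, integral_zero]
    rw [h0, Real.zero_rpow (one_div_ne_zero hp0.ne')]
    have hM0 : 0 ≤ ⨆ i, |x i| := by
      rcases isEmpty_or_nonempty (Fin n) with h | h
      · haveI := h
        rw [Real.iSup_of_isEmpty]
      · exact le_ciSup_of_le (Set.Finite.bddAbove (Set.finite_range _)) h.some (abs_nonneg _)
    have : (0:ℝ) ≤ Real.sqrt p * Real.sqrt (∑ i, x i ^ 2) + p * ⨆ i, |x i| :=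
      add_nonneg (mul_nonneg (Real.sqrt_nonneg _) (Real.sqrt_nonneg _))
        (mul_nonneg hp0.le hM0)
    linarith
  · push_neg at hx
    obtain ⟨i₀, hi₀⟩ := hx
    set M := ⨆ i, |x i| with hMdef
    set σ := Real.sqrt (∑ i, x i ^ 2) with hσdef
    have hbdd : BddAbove (Set.range fun i => |x i|) := Set.Finite.bddAbove (Set.finite_range _)
    have hxM : ∀ i, |x i| ≤ M := fun i => le_ciSup hbdd i
    have hM0 : 0 < M := lt_of_lt_of_le (abs_pos.mpr hi₀) (hxM i₀)
    have hsq0 : 0 < x i₀ ^ 2 := by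
      have := abs_pos.mpr hi₀
      nlinarith [sq_abs (x i₀)]
    have hsum0 : 0 < ∑ i, x i ^ 2 :=
      Finset.sum_pos' (fun i _ => sq_nonneg _) ⟨i₀, Finset.mem_univ _, hsq0⟩
    have hσ0 : 0 < σ := Real.sqrt_pos.mpr hsum0
    have hσsq : σ ^ 2 = ∑ i, x i ^ 2 := Real.sq_sqrt hsum0.le
    set lam := min M⁻¹ (Real.sqrt p / σ) with hlamdef
    have hlam0 : 0 < lam := lt_min (by positivity) (by positivity)
    have hlamM : lam ≤ M⁻¹ := min_le_left _ _
    have hlamσ : lam * σ ≤ Real.sqrt p := by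
      have h1 : lam ≤ Real.sqrt p / σ := min_le_right _ _
      calc lam * σ ≤ (Real.sqrt p / σ) * σ := mul_le_mul_of_nonneg_right h1 hσ0.le
        _ = Real.sqrt p := div_mul_cancel₀ _ hσ0.ne'
    set Y : Fin n → Ω → ℝ := fun i ω => x i * E i ω with hYdef
    have hYmeas : ∀ i, Measurable (Y i) := fun i => (hmeas i).const_mul (x i)
    have hYindep : iIndepFun Y ℙ :=
      hindep.comp (fun i t => x i * t) (fun i => measurable_const.mul measurable_id)
    have hcoord : ∀ t : ℝ, |t| ≤ M⁻¹ → ∀ i : Fin n,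
        Integrable (fun ω => Real.exp (t * Y i ω)) ℙ ∧
          (∫ ω, Real.exp (t * Y i ω)) ≤ Real.exp ((t * x i) ^ 2) := by
      intro t ht i
      have hu : |t * x i| ≤ 1 := by
        rw [abs_mul]
        calc |t| * |x i| ≤ M⁻¹ * M :=
              mul_le_mul ht (hxM i) (abs_nonneg _) (by positivity)
          _ = 1 := inv_mul_cancel₀ hM0.ne'
      have hg := gk_mgf (hmeas i) (hmap i) hu
      have heq : (fun ω => Real.exp (t * Y i ω))
          = fun ω => Real.exp ((t * x i) * E i ω) := by
        funext ω; rw [hYdef]; ring_nf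
      rw [heq]
      exact hg
    have hintS : ∀ t : ℝ, |t| ≤ M⁻¹ →
        Integrable (fun ω => Real.exp (t * ∑ i, x i * E i ω)) ℙ := by
      intro t ht
      have h1 := hYindep.integrable_exp_mul_sum (t := t) hYmeas (s := Finset.univ)
        (fun i _ => (hcoord t ht i).1)
      have heq : (fun ω => Real.exp (t * (∑ i, Y i) ω))
          = fun ω => Real.exp (t * ∑ i, x i * E i ω) := by
        funext ω; rw [Finset.sum_apply]
      rwa [heq] at h1
    have hmgfS : ∀ t : ℝ, |t| ≤ M⁻¹ →
        (∫ ω, Real.exp (t * ∑ i, x i * E i ω)) ≤ Real.exp (t ^ 2 * σ ^ 2) := by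
      intro t ht
      have hmgf := hYindep.mgf_sum (t := t) hYmeas Finset.univ
      have hL : mgf (∑ i, Y i) ℙ t = ∫ ω, Real.exp (t * ∑ i, x i * E i ω) := by
        simp only [mgf, Finset.sum_apply]; rfl
      calc (∫ ω, Real.exp (t * ∑ i, x i * E i ω))
          = ∏ i, mgf (Y i) ℙ t := by rw [← hL, hmgf]
        _ ≤ ∏ i, Real.exp ((t * x i) ^ 2) :=
            Finset.prod_le_prod (fun i _ => mgf_nonneg) (fun i _ => (hcoord t ht i).2)
        _ = Real.exp (∑ i, (t * x i) ^ 2) := (Real.exp_sum _ _).symm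
        _ = Real.exp (t ^ 2 * σ ^ 2) := by
            rw [hσsq]; congr 1
            rw [Finset.mul_sum]
            exact Finset.sum_congr rfl (fun i _ => by ring)
    have hlamle : |lam| ≤ M⁻¹ := by rw [abs_of_pos hlam0]; exact hlamM
    have hlamle' : |(-lam)| ≤ M⁻¹ := by rw [abs_neg, abs_of_pos hlam0]; exact hlamM
    have hint2 : Integrable (fun ω => Real.exp (-(lam * ∑ i, x i * E i ω))) ℙ := by
      have h1 := hintS (-lam) hlamle'
      refine h1.congr (ae_of_all _ fun ω => ?_)
      simp only [neg_mul]
    have hintR : Integrable (fun ω => (p / (Real.exp 1 * lam)) ^ p *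
        (Real.exp (lam * ∑ i, x i * E i ω)
          + Real.exp (-(lam * ∑ i, x i * E i ω)))) ℙ :=
      ((hintS lam hlamle).add hint2).const_mul _
    have hmono : (∫ ω, |∑ i, x i * E i ω| ^ p) ≤ (p / (Real.exp 1 * lam)) ^ p *
        ((∫ ω, Real.exp (lam * ∑ i, x i * E i ω))
          + ∫ ω, Real.exp (-(lam * ∑ i, x i * E i ω))) := by
      have step1 := integral_mono_of_nonneg
        (ae_of_all _ fun ω => Real.rpow_nonneg (abs_nonneg (∑ i, x i * E i ω)) p)
        hintR (ae_of_all _ fun ω => gk_rpow_le hp hlam0)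
      rwa [integral_const_mul, integral_add (hintS lam hlamle) hint2] at step1
    have hmgf2 : (∫ ω, Real.exp (-(lam * ∑ i, x i * E i ω)))
        ≤ Real.exp (lam ^ 2 * σ ^ 2) := by
      have h1 := hmgfS (-lam) hlamle'
      have heq : (fun ω => Real.exp ((-lam) * ∑ i, x i * E i ω))
          = fun ω => Real.exp (-(lam * ∑ i, x i * E i ω)) := by
        funext ω; rw [neg_mul]
      rw [heq] at h1
      rwa [neg_sq] at h1
    have hmgf1 : (∫ ω, Real.exp (lam * ∑ i, x i * E i ω))
        ≤ Real.exp (lam ^ 2 * σ ^ 2) := hmgfS lam hlamle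
    set A := Real.sqrt p * σ + p * M with hAdef
    have hA0 : 0 < A :=
      add_pos (mul_pos (Real.sqrt_pos.mpr hp0) hσ0) (mul_pos hp0 hM0)
    have hsp : Real.sqrt p * Real.sqrt p = p := Real.mul_self_sqrt hp0.le
    have hsp0 : 0 < Real.sqrt p := Real.sqrt_pos.mpr hp0
    have hplam : p / lam ≤ A := by
      have hinv : lam⁻¹ ≤ M + σ / Real.sqrt p := by
        rcases min_cases M⁻¹ (Real.sqrt p / σ) with ⟨h1, _⟩ | ⟨h1, _⟩
        · rw [hlamdef, h1, inv_inv]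
          exact le_add_of_nonneg_right (by positivity)
        · rw [hlamdef, h1, inv_div]
          exact le_add_of_nonneg_left hM0.le
      have h2 : p * (σ / Real.sqrt p) = Real.sqrt p * σ := by
        field_simp
        linear_combination -hsp
      calc p / lam = p * lam⁻¹ := div_eq_mul_inv _ _
        _ ≤ p * (M + σ / Real.sqrt p) := mul_le_mul_of_nonneg_left hinv hp0.le
        _ = p * M + p * (σ / Real.sqrt p) := by ring
        _ = A := by rw [h2, hAdef]; ring
    have hexp : Real.exp (lam ^ 2 * σ ^ 2) ≤ Real.exp p := by
      apply Real.exp_le_exp.mpr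
      have h1 : (lam * σ) ^ 2 ≤ Real.sqrt p ^ 2 :=
        pow_le_pow_left₀ (mul_nonneg hlam0.le hσ0.le) hlamσ 2
      rw [Real.sq_sqrt hp0.le] at h1
      calc lam ^ 2 * σ ^ 2 = (lam * σ) ^ 2 := by ring
        _ ≤ p := h1
    have hfinal : (∫ ω, |∑ i, x i * E i ω| ^ p) ≤ 2 * A ^ p := by
      calc (∫ ω, |∑ i, x i * E i ω| ^ p)
          ≤ (p / (Real.exp 1 * lam)) ^ p *
            ((∫ ω, Real.exp (lam * ∑ i, x i * E i ω))
              + ∫ ω, Real.exp (-(lam * ∑ i, x i * E i ω))) := hmono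
        _ ≤ (p / (Real.exp 1 * lam)) ^ p *
            (Real.exp (lam ^ 2 * σ ^ 2) + Real.exp (lam ^ 2 * σ ^ 2)) :=
            mul_le_mul_of_nonneg_left (add_le_add hmgf1 hmgf2)
              (Real.rpow_nonneg (by positivity) p)
        _ = (p / (Real.exp 1 * lam)) ^ p * (2 * Real.exp (lam ^ 2 * σ ^ 2)) := by ring
        _ ≤ (A / Real.exp 1) ^ p * (2 * Real.exp p) := by
            apply mul_le_mul ?_ ?_ (by positivity) (Real.rpow_nonneg (by positivity) p)
            · apply Real.rpow_le_rpow (by positivity) ?_ hp0.le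
              rw [show p / (Real.exp 1 * lam) = (p / lam) / Real.exp 1 by
                rw [div_div]; ring_nf]
              gcongr
            · linarith [hexp]
        _ = 2 * A ^ p := by
            rw [Real.div_rpow hA0.le (Real.exp_pos 1).le, Real.exp_one_rpow]
            field_simp
    have hIpos : 0 ≤ ∫ ω, |∑ i, x i * E i ω| ^ p :=
      integral_nonneg (fun ω => Real.rpow_nonneg (abs_nonneg _) _)
    calc (∫ ω, |∑ i, x i * E i ω| ^ p) ^ (1 / p)
        ≤ (2 * A ^ p) ^ (1 / p) := Real.rpow_le_rpow hIpos hfinal (by positivity)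
      _ = 2 ^ (1 / p) * (A ^ p) ^ (1 / p) :=
          Real.mul_rpow (by norm_num) (Real.rpow_nonneg hA0.le p)
      _ = 2 ^ (1 / p) * A := by
          rw [← Real.rpow_mul hA0.le, mul_one_div_cancel hp0.ne', Real.rpow_one]
      _ ≤ 2 * A := by
          apply mul_le_mul_of_nonneg_right ?_ hA0.le
          calc (2:ℝ) ^ (1 / p) ≤ 2 ^ (1:ℝ) :=
                Real.rpow_le_rpow_of_exponent_le (by norm_num)
                  (by rw [div_le_one hp0]; exact hp)
            _ = 2 := Real.rpow_one 2
      _ = 2 * (Real.sqrt p * σ + p * M) := by rw [hAdef]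
end
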